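/- Let X be a complete length space with metric d, and let W(X) be the warped product X × [0,∞) with warping function e^{-t}. Fix r > 0 and set R = e^{2r}·r. Then for any t > r and any point (x,t) ∈ W(X), the closed ball of radius r about (x,t) in W(X) is contained in B_R(x; e^{-(t-r)}d) × [t-r, ∞), where B_R(x; e^{-(t-r)}d) denotes the ball of radius R about x in X with the rescaled metric e^{-(t-r)}d. -/
import Mathlib


open Set Metric ENNReal Filter

/-- A metric space is a length space if the distance between any two points is the
infimum of lengths (total variations) of continuous curves joining them. -/
def IsLengthSpace (X : Type*) [MetricSpace X] : Prop :=
  ∀ x y : X, edist x y =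
    ⨅ (γ : ℝ → X) (_ : ContinuousOn γ (Set.Icc 0 1)) (_ : γ 0 = x) (_ : γ 1 = y),
      eVariationOn γ (Set.Icc 0 1)

/-- The warped length (with warping function `e^{-t}` applied to the base distance `d`)
of a curve `γ` in `X × ℝ` over the interval `[a,b]`, defined as a supremum over
partitions of sums of "warped chord lengths". -/
noncomputable def wLength {X : Type*} (d : X → X → ℝ) (γ : ℝ → X × ℝ) (a b : ℝ) : ℝ≥0∞ :=
  ⨆ p : {p : ℕ × (ℕ → ℝ) // Monotone p.2 ∧ ∀ i, p.2 i ∈ Set.Icc a b},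
    ∑ i ∈ Finset.range p.1.1,
      ENNReal.ofReal (Real.sqrt
        ((Real.exp (-(⨆ s ∈ Set.Icc (p.1.2 i) (p.1.2 (i + 1)), (γ s).2)) *
            d (γ (p.1.2 i)).1 (γ (p.1.2 (i + 1))).1) ^ 2 +
          ((γ (p.1.2 (i + 1))).2 - (γ (p.1.2 i)).2) ^ 2))

/-- The warped-product path (pseudo)distance on `X × [lo, ∞)`: the infimum of warped
lengths of Lipschitz curves joining two points and staying at height `≥ lo`. -/
noncomputable def wDist {X : Type*} [MetricSpace X] (d : X → X → ℝ) (lo : ℝ)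
    (p q : X × ℝ) : ℝ≥0∞ :=
  ⨅ (γ : ℝ → X × ℝ) (_ : ∃ K, LipschitzWith K γ) (_ : γ 0 = p) (_ : γ 1 = q)
    (_ : ∀ t ∈ Set.Icc (0 : ℝ) 1, lo ≤ (γ t).2), wLength d γ 0 1

/-- Real-valued version of the warped distance. -/
noncomputable def wDistR {X : Type*} [MetricSpace X] (d : X → X → ℝ) (lo : ℝ)
    (p q : X × ℝ) : ℝ :=
  (wDist d lo p q).toReal

/-- `f` is a `(K, C)`-quasi-isometric embedding. -/
def QIEmb {X Y : Type*} [MetricSpace X] [MetricSpace Y] (K C : ℝ) (f : X → Y) : Prop :=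
  ∀ a b : X, dist a b / K - C ≤ dist (f a) (f b) ∧ dist (f a) (f b) ≤ K * dist a b + C

/-- `f` is a `(K, C)`-quasi-isometry: a quasi-isometric embedding with `C`-dense image. -/
def QuasiIsometry {X Y : Type*} [MetricSpace X] [MetricSpace Y] (K C : ℝ) (f : X → Y) : Prop :=
  QIEmb K C f ∧ ∀ y : Y, ∃ x : X, dist y (f x) ≤ C

/-- A single warped chord is a lower bound for the warped length. -/
lemma chord_le_wLength {X : Type*} (d : X → X → ℝ) (γ : ℝ → X × ℝ) (a b u0 u1 : ℝ)
    (h0 : u0 ∈ Set.Icc a b) (h1 : u1 ∈ Set.Icc a b) (h01 : u0 ≤ u1) :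
    ENNReal.ofReal (Real.sqrt
        ((Real.exp (-(⨆ s ∈ Set.Icc u0 u1, (γ s).2)) * d (γ u0).1 (γ u1).1) ^ 2 +
          ((γ u1).2 - (γ u0).2) ^ 2)) ≤ wLength d γ a b := by
  have hmono : Monotone (fun i : ℕ => if i = 0 then u0 else u1) := by
    intro i j hij
    by_cases hi : i = 0 <;> by_cases hj : j = 0 <;> simp [hi, hj, h01]
    · omega
  have hmem : ∀ i : ℕ, (if i = 0 then u0 else u1) ∈ Set.Icc a b := by
    intro i; by_cases hi : i = 0 <;> simp [hi, h0, h1]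
  refine le_iSup_of_le ⟨(1, fun i : ℕ => if i = 0 then u0 else u1), hmono, hmem⟩ ?_
  simp

/-- For `r > 0`, `R = e^{2r}·r`, `t > r`, the closed `r`-ball about
`(x,t)` in the warped product `W(X)` is contained in
`B_R(x; e^{-(t-r)}·d) × [t-r, ∞)`. -/
theorem ball_in_warped_product_contained {X : Type*} [MetricSpace X] [CompleteSpace X]
    (hX : IsLengthSpace X) (r R t : ℝ) (hr : 0 < r) (hR : R = Real.exp (2 * r) * r)
    (ht : r < t) (x y : X) (s : ℝ) (hs : 0 ≤ s)
    (hmem : wDist dist 0 (x, t) (y, s) ≤ ENNReal.ofReal r) :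
    Real.exp (-(t - r)) * dist x y ≤ R ∧ t - r ≤ s := by
  subst hR
  have key : ∀ ε > (0:ℝ),
      Real.exp (-(t - r)) * dist x y ≤ Real.exp (2 * r + ε) * (r + ε) ∧ t - s ≤ r + ε := by
    intro ε hε
    have hlt : wDist dist 0 (x, t) (y, s) < ENNReal.ofReal (r + ε) :=
      lt_of_le_of_lt hmem (by
        rw [ENNReal.ofReal_lt_ofReal_iff (by linarith)]; linarith)
    rw [wDist] at hlt
    simp only [iInf_lt_iff] at hlt
    obtain ⟨γ, hlip, h0, h1, hge, hL⟩ := hlt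
    have hLne : wLength dist γ 0 1 ≠ ⊤ := hL.ne_top
    have hLto : (wLength dist γ 0 1).toReal ≤ r + ε :=
      le_of_lt ((ENNReal.lt_ofReal_iff_toReal_lt hLne).mp hL)
    -- heights along the curve are bounded by t + (r + ε)
    have hheight : ∀ a ∈ Set.Icc (0:ℝ) 1, (γ a).2 ≤ t + (r + ε) := by
      intro a ha
      have hc := chord_le_wLength dist γ 0 1 0 a (by simp) ha ha.1
      have hsq : (γ a).2 - (γ 0).2 ≤ Real.sqrt
          ((Real.exp (-(⨆ s ∈ Set.Icc 0 a, (γ s).2)) * dist (γ 0).1 (γ a).1) ^ 2 +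
            ((γ a).2 - (γ 0).2) ^ 2) := by
        calc (γ a).2 - (γ 0).2 ≤ |(γ a).2 - (γ 0).2| := le_abs_self _
        _ = Real.sqrt (((γ a).2 - (γ 0).2) ^ 2) := (Real.sqrt_sq_eq_abs _).symm
        _ ≤ _ := Real.sqrt_le_sqrt (le_add_of_nonneg_left (sq_nonneg _))
      have h2 : ENNReal.ofReal ((γ a).2 - (γ 0).2) ≤ wLength dist γ 0 1 :=
        le_trans (ENNReal.ofReal_le_ofReal hsq) hc
      have h3 : (γ a).2 - (γ 0).2 ≤ (wLength dist γ 0 1).toReal :=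
        (ENNReal.ofReal_le_iff_le_toReal hLne).mp h2
      have h4 : (γ 0).2 = t := by rw [h0]
      linarith
    -- bound on the supremum of heights
    have hMle : (⨆ s ∈ Set.Icc (0:ℝ) 1, (γ s).2) ≤ t + (r + ε) := by
      refine Real.iSup_le (fun a => Real.iSup_le (fun ha => hheight a ha) (by linarith))
        (by linarith)
    set M := ⨆ s ∈ Set.Icc (0:ℝ) 1, (γ s).2 with hM
    -- the main chord from 0 to 1
    have hc := chord_le_wLength dist γ 0 1 0 1 (by simp) (by simp) zero_le_one
    have hcr : Real.sqrt ((Real.exp (-M) * dist (γ 0).1 (γ 1).1) ^ 2 +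
        ((γ 1).2 - (γ 0).2) ^ 2) ≤ (wLength dist γ 0 1).toReal :=
      (ENNReal.ofReal_le_iff_le_toReal hLne).mp hc
    have hA : Real.exp (-M) * dist (γ 0).1 (γ 1).1 ≤ r + ε := by
      have : Real.exp (-M) * dist (γ 0).1 (γ 1).1 ≤ Real.sqrt
          ((Real.exp (-M) * dist (γ 0).1 (γ 1).1) ^ 2 + ((γ 1).2 - (γ 0).2) ^ 2) := by
        calc Real.exp (-M) * dist (γ 0).1 (γ 1).1
            ≤ |Real.exp (-M) * dist (γ 0).1 (γ 1).1| := le_abs_self _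
        _ = Real.sqrt ((Real.exp (-M) * dist (γ 0).1 (γ 1).1) ^ 2) :=
            (Real.sqrt_sq_eq_abs _).symm
        _ ≤ _ := Real.sqrt_le_sqrt (le_add_of_nonneg_right (sq_nonneg _))
      linarith
    have hB : |(γ 1).2 - (γ 0).2| ≤ r + ε := by
      have : |(γ 1).2 - (γ 0).2| ≤ Real.sqrt
          ((Real.exp (-M) * dist (γ 0).1 (γ 1).1) ^ 2 + ((γ 1).2 - (γ 0).2) ^ 2) := by
        calc |(γ 1).2 - (γ 0).2| = Real.sqrt (((γ 1).2 - (γ 0).2) ^ 2) :=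
            (Real.sqrt_sq_eq_abs _).symm
        _ ≤ _ := Real.sqrt_le_sqrt (le_add_of_nonneg_left (sq_nonneg _))
      linarith
    have h00 : (γ 0) = (x, t) := h0
    have h11 : (γ 1) = (y, s) := h1
    rw [h00, h11] at hA hB
    constructor
    · have hfac : Real.exp (-(t - r)) = Real.exp (M - (t - r)) * Real.exp (-M) := by
        rw [← Real.exp_add]; ring_nf
      calc Real.exp (-(t - r)) * dist x y
          = Real.exp (M - (t - r)) * (Real.exp (-M) * dist x y) := by rw [hfac]; ring
        _ ≤ Real.exp (2 * r + ε) * (r + ε) := by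
            apply mul_le_mul
            · exact Real.exp_le_exp.mpr (by linarith)
            · exact hA
            · positivity
            · positivity
    · have := abs_le.mp hB
      simp only at this
      linarith [this.1]
  constructor
  · have htend : Tendsto (fun ε : ℝ => Real.exp (2 * r + ε) * (r + ε)) (nhdsWithin 0 (Set.Ioi 0))
        (nhds (Real.exp (2 * r) * r)) := by
      have hcont : Continuous (fun ε : ℝ => Real.exp (2 * r + ε) * (r + ε)) := by
        continuity
      have := hcont.tendsto 0
      simpa using this.mono_left nhdsWithin_le_nhds
    refine ge_of_tendsto htend ?_
    exact eventually_nhdsWithin_of_forall (fun ε hε => (key ε hε).1)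
  · have : t - s ≤ r := le_of_forall_pos_le_add (fun ε hε => (key ε hε).2)
    linarith
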